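/- (Guessing a random function.) Let (Ω, F, P) be a probability space, f : Ω × [0,1] → {a,b} jointly measurable, and ε > 0. Then there exists n* ∈ ℕ and a map α assigning to each ω a function g_ω : [0,1) → {a,b} such that: (i) on each interval [k/2^{n*}, (k+ε)/2^{n*}), g_ω depends only on the restriction of f(ω,·) to [0, k/2^{n*}) (non-anticipativity with delay); and (ii) P({ω : λ({t ∈ [0,1) : f(ω,t) = g_ω(t)}) ≥ 1 - 2ε}) ≥ 1 - ε. -/

import Mathlib

open MeasureTheory Set Filter Topology
open scoped ENNReal symmDiff

lemma tendsto_volume_symmDiff_translate {A : Set ℝ} (hA : MeasurableSet A)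
    (hfin : volume A ≠ ⊤) {δ : ℕ → ℝ} (hδ : Tendsto δ atTop (𝓝 0)) :
    Tendsto (fun n => volume ({t : ℝ | t - δ n ∈ A} ∆ A)) atTop (𝓝 0) := by
  have hF : Continuous fun c : ℝ => ContinuousMap.mk (fun x : ℝ => x - c)
      (by fun_prop) := by
    apply ContinuousMap.continuous_of_continuous_uncurry
    exact continuous_snd.sub continuous_fst
  have key := tendsto_measure_symmDiff_preimage_nhds_zero (μ := volume) (ν := volume)
      (f := fun n => ContinuousMap.mk (fun x : ℝ => x - δ n) (by fun_prop))
      (g := ContinuousMap.mk (fun x : ℝ => x - (0:ℝ)) (by fun_prop))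
      ((hF.tendsto 0).comp hδ)
      (Eventually.of_forall fun n => measurePreserving_sub_right volume (δ n))
      (measurePreserving_sub_right volume 0) hA.nullMeasurableSet hfin
  have h0 : (ContinuousMap.mk (fun x : ℝ => x - (0:ℝ)) (by fun_prop)) ⁻¹' A = A := by
    ext x; simp
  simpa [h0, Set.preimage, Set.ext_iff] using key

theorem guessing_a_random_function (Ω : Type*) [MeasurableSpace Ω]
    (P : Measure Ω) [IsProbabilityMeasure P]
    (f : Ω × ℝ → Bool) (hf : Measurable f) (ε : ℝ) (hε : 0 < ε) :
    ∃ (nstar : ℕ) (g : Ω → ℝ → Bool),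
      (∀ k : ℕ, k < 2 ^ nstar → ∀ ω ω' : Ω,
        (∀ t ∈ Ico (0 : ℝ) ((k : ℝ) / 2 ^ nstar), f (ω, t) = f (ω', t)) →
        ∀ t ∈ Ico ((k : ℝ) / 2 ^ nstar) (((k : ℝ) + ε) / 2 ^ nstar),
          g ω t = g ω' t) ∧
      (∀ k : ℕ, k < 2 ^ nstar → ∀ ω ω' : Ω,
        (∀ t ∈ Ico (0 : ℝ) (((k : ℝ) + ε) / 2 ^ nstar), f (ω, t) = f (ω', t)) →
        ∀ t ∈ Ico (((k : ℝ) + ε) / 2 ^ nstar) (((k : ℝ) + 1) / 2 ^ nstar),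
          g ω t = g ω' t) ∧
      ENNReal.ofReal (1 - ε) ≤
        P {ω : Ω |
            ENNReal.ofReal (1 - 2 * ε) ≤
              volume {t ∈ Ico (0 : ℝ) 1 | f (ω, t) = g ω t}} := by
  by_cases hhalf : ε ≤ 1 / 2
  · -- main case
    set δ : ℕ → ℝ := fun n => (1 - ε) / 2 ^ n with hδdef
    have hδpos : ∀ n, 0 < δ n := fun n => by
      have : (0:ℝ) < 2 ^ n := by positivity
      have h1 : (0:ℝ) < 1 - ε := by linarith
      positivity
    have hδlt1 : ∀ n, δ n < 1 := fun n => by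
      have h2 : (1:ℝ) ≤ 2 ^ n := one_le_pow₀ (by norm_num)
      rw [hδdef]
      calc (1 - ε) / 2 ^ n ≤ (1 - ε) / 1 := by
            apply div_le_div_of_nonneg_left (by linarith) one_pos h2
        _ = 1 - ε := by ring
        _ < 1 := by linarith
    have hδlim : Tendsto δ atTop (𝓝 0) := by
      have := tendsto_pow_atTop_nhds_zero_of_lt_one (r := (1:ℝ)/2) (by norm_num) (by norm_num)
      have h := this.const_mul (1 - ε)
      simpa [hδdef, div_pow, div_eq_mul_inv, mul_comm] using h
    set g : ℕ → Ω → ℝ → Bool := fun n ω t => if t < δ n then true else f (ω, t - δ n)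
      with hgdef
    -- mismatch sets
    set M : ℕ → Set (Ω × ℝ) := fun n => {p | p.2 ∈ Ico (0:ℝ) 1 ∧ ¬ f p = g n p.1 p.2}
      with hMdef
    have hgm : ∀ n, Measurable fun p : Ω × ℝ => g n p.1 p.2 := by
      intro n
      apply Measurable.ite
      · exact measurable_snd measurableSet_Iio
      · exact measurable_const
      · exact hf.comp (measurable_fst.prodMk (measurable_snd.sub measurable_const))
    have hMmeas : ∀ n, MeasurableSet (M n) := by
      intro n
      apply MeasurableSet.inter
      · exact measurable_snd measurableSet_Ico
      · exact (measurableSet_eq_fun hf (hgm n)).compl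
    set m : ℕ → Ω → ℝ≥0∞ := fun n ω => volume {t | (ω, t) ∈ M n} with hmdef
    have hmmeas : ∀ n, Measurable (m n) := fun n =>
      measurable_measure_prodMk_left (hMmeas n)
    have hm_le : ∀ n ω, m n ω ≤ 1 := by
      intro n ω
      have : {t | (ω, t) ∈ M n} ⊆ Ico (0:ℝ) 1 := fun t ht => ht.1
      calc m n ω ≤ volume (Ico (0:ℝ) 1) := measure_mono this
        _ = 1 := by simp [Real.volume_Ico]
    have hm_tendsto : ∀ ω, Tendsto (fun n => m n ω) atTop (𝓝 0) := by
      intro ω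
      have hfω : Measurable fun t => f (ω, t) := hf.comp measurable_prodMk_left
      set A : Set ℝ := {t | t ∈ Ico (0:ℝ) 1 ∧ f (ω, t) = true} with hAdef
      have hA : MeasurableSet A :=
        measurableSet_Ico.inter (hfω (MeasurableSet.singleton true))
      have hAfin : volume A ≠ ⊤ := by
        have : A ⊆ Ico (0:ℝ) 1 := fun t ht => ht.1
        exact ((measure_mono this).trans_lt (by simp [Real.volume_Ico])).ne
      have hsub : ∀ n, {t | (ω, t) ∈ M n} ⊆ Ico 0 (δ n) ∪ ({t : ℝ | t - δ n ∈ A} ∆ A) := by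
        intro n t ht
        obtain ⟨ht01, hne⟩ := ht
        by_cases htδ : t < δ n
        · exact Or.inl ⟨ht01.1, htδ⟩
        · right
          have hgval : g n ω t = f (ω, t - δ n) := if_neg htδ
          rw [hgval] at hne
          have ht2 : t - δ n ∈ Ico (0:ℝ) 1 :=
            ⟨by linarith [not_lt.1 htδ], by linarith [ht01.2, hδpos n]⟩
          rw [Set.mem_symmDiff]
          cases hb : f (ω, t) with
          | true =>
            right
            refine ⟨⟨ht01, hb⟩, fun hs => hne ?_⟩
            rw [hb, hs.2]
          | false =>
            left
            have hb2 : f (ω, t - δ n) = true := by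
              cases hb2 : f (ω, t - δ n) with
              | true => rfl
              | false => exact absurd (hb.trans hb2.symm) hne
            exact ⟨⟨ht2, hb2⟩, fun hs => by rw [hs.2] at hb; exact Bool.noConfusion hb⟩
      have hΔ := tendsto_volume_symmDiff_translate hA hAfin hδlim
      have hIco : Tendsto (fun n => volume (Ico (0:ℝ) (δ n))) atTop (𝓝 0) := by
        have : Tendsto (fun n => ENNReal.ofReal (δ n)) atTop (𝓝 (ENNReal.ofReal 0)) :=
          (ENNReal.continuous_ofReal.tendsto 0).comp hδlim
        simpa [Real.volume_Ico] using this
      have hsum : Tendsto (fun n => volume (Ico (0:ℝ) (δ n)) +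
          volume ({t : ℝ | t - δ n ∈ A} ∆ A)) atTop (𝓝 0) := by
        simpa using hIco.add hΔ
      refine tendsto_of_tendsto_of_tendsto_of_le_of_le tendsto_const_nhds hsum
        (fun n => zero_le) (fun n => ?_)
      calc m n ω ≤ volume (Ico 0 (δ n) ∪ ({t : ℝ | t - δ n ∈ A} ∆ A)) :=
            measure_mono (hsub n)
        _ ≤ _ := measure_union_le _ _
    have hint : Tendsto (fun n => ∫⁻ ω, m n ω ∂P) atTop (𝓝 0) := by
      have h0 : (0:ℝ≥0∞) = ∫⁻ _ω, (0:ℝ≥0∞) ∂P := by simp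
      rw [h0]
      refine tendsto_lintegral_of_dominated_convergence (fun _ => 1)
        (fun n => (hmmeas n)) (fun n => Eventually.of_forall fun ω => hm_le n ω) ?_
        (Eventually.of_forall fun ω => hm_tendsto ω)
      simp
    have hc : (0:ℝ≥0∞) < ENNReal.ofReal ε * ENNReal.ofReal (2 * ε) := by
      have h1 : (0:ℝ) < 2 * ε := by linarith
      apply ENNReal.mul_pos
      · simp [ENNReal.ofReal_pos, hε]
      · simp [ENNReal.ofReal_pos, h1, hε]
    obtain ⟨N, hN⟩ := (hint.eventually_lt_const hc).exists
    have h2ne0 : ENNReal.ofReal (2 * ε) ≠ 0 := by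
      simp only [ne_eq, ENNReal.ofReal_eq_zero, not_le]; linarith
    have h2netop : ENNReal.ofReal (2 * ε) ≠ ⊤ := ENNReal.ofReal_ne_top
    refine ⟨N, g N, ?_, ?_, ?_⟩
    · -- non-anticipativity (i)
      intro k hk ω ω' H t ht
      simp only [hgdef]
      by_cases hlt : t < δ N
      · rw [if_pos hlt, if_pos hlt]
      · rw [if_neg hlt, if_neg hlt]
        have hu : (0:ℝ) < 2 ^ N := by positivity
        refine H (t - δ N) ⟨?_, ?_⟩
        · linarith [not_lt.1 hlt]
        · have h1 : t * 2 ^ N < (k:ℝ) + ε := (lt_div_iff₀ hu).1 ht.2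
          rw [lt_div_iff₀ hu, sub_mul, div_mul_cancel₀ _ hu.ne']
          linarith
    · -- non-anticipativity (ii)
      intro k hk ω ω' H t ht
      simp only [hgdef]
      by_cases hlt : t < δ N
      · rw [if_pos hlt, if_pos hlt]
      · rw [if_neg hlt, if_neg hlt]
        have hu : (0:ℝ) < 2 ^ N := by positivity
        refine H (t - δ N) ⟨?_, ?_⟩
        · linarith [not_lt.1 hlt]
        · have h1 : t * 2 ^ N < (k:ℝ) + 1 := (lt_div_iff₀ hu).1 ht.2
          rw [lt_div_iff₀ hu, sub_mul, div_mul_cancel₀ _ hu.ne']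
          linarith
    · -- probability bound
      set bad := {ω | ENNReal.ofReal (2 * ε) ≤ m N ω} with hbaddef
      have hbadmeas : MeasurableSet bad := measurableSet_le measurable_const (hmmeas N)
      have hbad : P bad ≤ ENNReal.ofReal ε := by
        calc P bad ≤ (∫⁻ ω, m N ω ∂P) / ENNReal.ofReal (2 * ε) :=
              meas_ge_le_lintegral_div (hmmeas N).aemeasurable h2ne0 h2netop
          _ ≤ (ENNReal.ofReal ε * ENNReal.ofReal (2 * ε)) / ENNReal.ofReal (2 * ε) := by
              gcongr
          _ = ENNReal.ofReal ε := by
              rw [mul_div_assoc, ENNReal.div_self h2ne0 h2netop, mul_one]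
      have hsub : badᶜ ⊆ {ω : Ω | ENNReal.ofReal (1 - 2 * ε) ≤
          volume {t ∈ Ico (0:ℝ) 1 | f (ω, t) = g N ω t}} := by
        intro ω hω
        simp only [hbaddef, mem_compl_iff, mem_setOf_eq, not_le] at hω
        have hm : m N ω ≤ ENNReal.ofReal (2 * ε) := hω.le
        have hsubset : Ico (0:ℝ) 1 \ {t | (ω, t) ∈ M N} ⊆
            {t ∈ Ico (0:ℝ) 1 | f (ω, t) = g N ω t} := by
          rintro t ⟨ht, hnt⟩
          refine ⟨ht, ?_⟩
          by_contra h
          exact hnt ⟨ht, h⟩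
        show ENNReal.ofReal (1 - 2 * ε) ≤ _
        calc ENNReal.ofReal (1 - 2 * ε) = 1 - ENNReal.ofReal (2 * ε) := by
              rw [ENNReal.ofReal_sub _ (by positivity), ENNReal.ofReal_one]
          _ ≤ 1 - m N ω := tsub_le_tsub_left hm 1
          _ = volume (Ico (0:ℝ) 1) - m N ω := by simp [Real.volume_Ico]
          _ ≤ volume (Ico (0:ℝ) 1 \ {t | (ω, t) ∈ M N}) := le_measure_diff
          _ ≤ _ := measure_mono hsubset
      calc ENNReal.ofReal (1 - ε) = 1 - ENNReal.ofReal ε := by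
            rw [ENNReal.ofReal_sub _ hε.le, ENNReal.ofReal_one]
        _ ≤ 1 - P bad := tsub_le_tsub_left hbad 1
        _ = P badᶜ := (prob_compl_eq_one_sub hbadmeas).symm
        _ ≤ _ := measure_mono hsub
  · -- trivial case ε > 1/2
    refine ⟨0, fun _ _ => true, fun _ _ _ _ _ _ _ => rfl, fun _ _ _ _ _ _ _ => rfl, ?_⟩
    have h2 : 1 - 2 * ε ≤ 0 := by push_neg at hhalf; linarith
    have hzero : ENNReal.ofReal (1 - 2 * ε) = 0 := ENNReal.ofReal_eq_zero.2 h2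
    have huniv : {ω : Ω | ENNReal.ofReal (1 - 2 * ε) ≤
        volume {t ∈ Ico (0:ℝ) 1 | f (ω, t) = true}} = univ := by
      ext ω; simp [hzero]
    simp only [huniv, measure_univ]
    calc ENNReal.ofReal (1 - ε) ≤ ENNReal.ofReal 1 :=
          ENNReal.ofReal_le_ofReal (by linarith)
      _ = 1 := ENNReal.ofReal_one
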